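/- Let p ∈ [1,∞), let I be a nonempty set, let D be an increasable doubly substochastic operator on ℓ^p(I), let I₀ be an at most countable set, and let {θ_k : k ∈ I₀} be a family of injective maps θ_k : I → I with pairwise disjoint images (θ_i(I) ∩ θ_j(I) = ∅ for i ≠ j). Then there exists an increasable doubly substochastic operator S on ℓ^p(I) such that P_{θ_k} ∘ D = S ∘ P_{θ_k} for every k ∈ I₀. -/

import Mathlib

open scoped ENNReal BigOperators

noncomputable section

/-- ℓᵖ(I) with real scalars. -/
abbrev Lp (I : Type*) (p : ℝ≥0∞) := lp (fun _ : I => ℝ) p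

/-- The standard basis vector `e_j` of `ℓᵖ(I)`. -/
def stdVec {I : Type*} (p : ℝ≥0∞) (j : I) : Lp I p :=
  haveI := Classical.decEq I
  lp.single p j 1

/-- A bounded operator on ℓᵖ(I) is positive if it maps the positive cone into itself. -/
def IsPos {I : Type*} {p : ℝ≥0∞} [Fact (1 ≤ p)] (A : Lp I p →L[ℝ] Lp I p) : Prop :=
  ∀ f : Lp I p, (∀ i, 0 ≤ f i) → ∀ i, 0 ≤ A f i

/-- Doubly stochastic operator on ℓᵖ(I). -/
def DoublyStochastic {I : Type*} {p : ℝ≥0∞} [Fact (1 ≤ p)]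
    (A : Lp I p →L[ℝ] Lp I p) : Prop :=
  IsPos A ∧ (∀ i : I, HasSum (fun j : I => A (stdVec p j) i) 1)
          ∧ (∀ j : I, HasSum (fun i : I => A (stdVec p j) i) 1)

/-- Doubly substochastic operator on ℓᵖ(I) (finite partial sums formulation). -/
def DoublySubstochastic {I : Type*} {p : ℝ≥0∞} [Fact (1 ≤ p)]
    (A : Lp I p →L[ℝ] Lp I p) : Prop :=
  IsPos A ∧ (∀ i : I, ∀ s : Finset I, ∑ j ∈ s, A (stdVec p j) i ≤ 1)
          ∧ (∀ j : I, ∀ s : Finset I, ∑ i ∈ s, A (stdVec p j) i ≤ 1)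

/-- Increasable doubly substochastic operator on ℓᵖ(I). -/
def IncreasableDsS {I : Type*} {p : ℝ≥0∞} [Fact (1 ≤ p)]
    (A : Lp I p →L[ℝ] Lp I p) : Prop :=
  IsPos A ∧ ∃ A₁ : Lp I p →L[ℝ] Lp I p, DoublyStochastic A₁ ∧
    ∀ i j : I, A (stdVec p j) i ≤ A₁ (stdVec p j) i

/-- Majorization: `f ≺ g`. -/
def Maj {I : Type*} {p : ℝ≥0∞} [Fact (1 ≤ p)] (f g : Lp I p) : Prop :=
  ∃ D : Lp I p →L[ℝ] Lp I p, DoublyStochastic D ∧ f = D g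

/-- Weak majorization: `f ≺_w g`. -/
def MajW {I : Type*} {p : ℝ≥0∞} [Fact (1 ≤ p)] (f g : Lp I p) : Prop :=
  ∃ D : Lp I p →L[ℝ] Lp I p, DoublySubstochastic D ∧ f = D g

/-- Submajorization: `f ≺_s g`. -/
def MajS {I : Type*} {p : ℝ≥0∞} [Fact (1 ≤ p)] (f g : Lp I p) : Prop :=
  ∃ D : Lp I p →L[ℝ] Lp I p, IncreasableDsS D ∧ f = D g

/-- Permutation operator on ℓᵖ(I). -/
def IsPermutationOp {I : Type*} {p : ℝ≥0∞} [Fact (1 ≤ p)]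
    (P : Lp I p →L[ℝ] Lp I p) : Prop :=
  ∃ θ : I ≃ I, ∀ j : I, P (stdVec p j) = stdVec p (θ j)

/-- `P` is the operator `P_θ` associated with the injection `θ : I → I`,
i.e. `P f = ∑_{k ∈ I} f(k) e_{θ(k)}`. -/
def IsPTheta {I : Type*} {p : ℝ≥0∞} [Fact (1 ≤ p)] (θ : I → I)
    (P : Lp I p →L[ℝ] Lp I p) : Prop :=
  (∀ f : Lp I p, ∀ k : I, P f (θ k) = f k) ∧
  (∀ f : Lp I p, ∀ i : I, i ∉ Set.range θ → P f i = 0)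

/-- `T` preserves weak majorization on the positive cone. -/
def PreservesMajW {I : Type*} {p : ℝ≥0∞} [Fact (1 ≤ p)]
    (T : Lp I p →L[ℝ] Lp I p) : Prop :=
  ∀ f g : Lp I p, (∀ i, 0 ≤ f i) → (∀ i, 0 ≤ g i) → MajW f g → MajW (T f) (T g)

/-- `T` preserves submajorization on the positive cone. -/
def PreservesMajS {I : Type*} {p : ℝ≥0∞} [Fact (1 ≤ p)]
    (T : Lp I p →L[ℝ] Lp I p) : Prop :=
  ∀ f g : Lp I p, (∀ i, 0 ≤ f i) → (∀ i, 0 ≤ g i) → MajS f g → MajS (T f) (T g)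

end

noncomputable section

namespace StmtAux

variable {I : Type*} {p : ℝ≥0∞} [Fact (1 ≤ p)]

omit [Fact (1 ≤ p)] in
lemma stdVec_self (j : I) : stdVec p j j = 1 := by
  classical
  rw [stdVec]
  exact lp.single_apply_self p j 1

omit [Fact (1 ≤ p)] in
lemma stdVec_ne {i j : I} (h : i ≠ j) : stdVec p j i = 0 := by
  classical
  rw [stdVec]
  exact lp.single_apply_ne p j 1 h

omit [Fact (1 ≤ p)] in
lemma stdVec_nonneg (j i : I) : 0 ≤ stdVec p j (i : I) := by
  rcases eq_or_ne i j with rfl | h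
  · rw [stdVec_self]; norm_num
  · rw [stdVec_ne h]

lemma toRealPos (hp : p ≠ ∞) : 0 < p.toReal := by
  have h1 : (1:ℝ≥0∞) ≤ p := Fact.out
  have h2 := ENNReal.toReal_mono hp h1
  simp only [ENNReal.toReal_one] at h2
  linarith

lemma memℓp_comp (hp : p ≠ ∞) {J : Type*} (σ : J → I) (hσ : Function.Injective σ) (f : Lp I p) :
    Memℓp (fun j => f (σ j)) p := by
  apply memℓp_gen
  exact ((lp.memℓp f).summable (toRealPos hp)).comp_injective hσ

/-- Pullback along an injective map, as a linear map on `ℓᵖ`. -/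
def cmapL (hp : p ≠ ∞) {J : Type*} (σ : J → I) (hσ : Function.Injective σ) :
    Lp I p →ₗ[ℝ] Lp J p where
  toFun f := ⟨fun j => f (σ j), memℓp_comp hp σ hσ f⟩
  map_add' f g := lp.ext (funext fun j => by simp; rfl)
  map_smul' c f := lp.ext (funext fun j => by simp)

lemma cmapL_apply (hp : p ≠ ∞) {J : Type*} (σ : J → I) (hσ : Function.Injective σ)
    (f : Lp I p) (j : J) : cmapL hp σ hσ f j = f (σ j) := rfl

variable {K : Type*}

lemma theta_slice_inj (Θ : K × I → I) (hΘ : Function.Injective Θ) (k : K) :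
    Function.Injective (fun j => Θ (k, j)) := by
  intro a b h
  have := hΘ h
  simpa using congrArg Prod.snd this

/-- Restriction to the `k`-th block. -/
def sliceL (hp : p ≠ ∞) (Θ : K × I → I) (hΘ : Function.Injective Θ) (k : K) :
    Lp I p →ₗ[ℝ] Lp I p :=
  cmapL hp (fun j => Θ (k, j)) (theta_slice_inj Θ hΘ k)

lemma sliceL_apply (hp : p ≠ ∞) (Θ : K × I → I) (hΘ : Function.Injective Θ) (k : K)
    (f : Lp I p) (j : I) : sliceL hp Θ hΘ k f j = f (Θ (k, j)) := rfl

lemma sliceL_norm (hp : p ≠ ∞) (Θ : K × I → I) (hΘ : Function.Injective Θ) (k : K)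
    (f : Lp I p) :
    ‖sliceL hp Θ hΘ k f‖ ^ p.toReal = ∑' j, ‖f (Θ (k, j))‖ ^ p.toReal := by
  rw [lp.norm_rpow_eq_tsum (toRealPos hp)]
  rfl

lemma slice_sum_le (hp : p ≠ ∞) (Θ : K × I → I) (hΘ : Function.Injective Θ)
    (f : Lp I p) (t : Finset K) :
    ∑ k ∈ t, ‖sliceL hp Θ hΘ k f‖ ^ p.toReal ≤ ‖f‖ ^ p.toReal := by
  have hq := toRealPos (p := p) hp
  set F : I → ℝ := fun i => ‖f i‖ ^ p.toReal with hF
  have hFnn : ∀ i, 0 ≤ F i := fun i => Real.rpow_nonneg (norm_nonneg _) _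
  have hFsum : Summable F := (lp.memℓp f).summable hq
  have hrw : ∀ k ∈ t, ‖sliceL hp Θ hΘ k f‖ ^ p.toReal = ∑' j, F (Θ (k, j)) := by
    intro k _; rw [sliceL_norm]
  rw [Finset.sum_congr rfl hrw]
  -- reindex as a sum over ↥t × I
  have heInj : Function.Injective (fun x : ↥t × I => Θ (x.1.1, x.2)) := by
    intro a b h
    have := hΘ h
    obtain ⟨h1, h2⟩ := Prod.mk.inj this
    exact Prod.ext (Subtype.ext h1) h2
  have hsum : Summable (fun x : ↥t × I => F (Θ (x.1.1, x.2))) :=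
    hFsum.comp_injective heInj
  have key : ∑ k ∈ t, ∑' j, F (Θ (k, j)) = ∑' x : ↥t × I, F (Θ (x.1.1, x.2)) := by
    rw [Summable.tsum_prod hsum, tsum_fintype, ← Finset.sum_coe_sort t (fun k => ∑' j, F (Θ (k, j)))]
  rw [key]
  have hle := Summable.tsum_le_tsum_of_inj (fun x : ↥t × I => Θ (x.1.1, x.2)) heInj
    (fun c _ => hFnn c) (fun x => le_rfl) hsum hFsum
  calc ∑' x : ↥t × I, F (Θ (x.1.1, x.2)) ≤ ∑' i, F i := hle
    _ = ‖f‖ ^ p.toReal := (lp.norm_rpow_eq_tsum hq f).symm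

/-- The underlying function of the block operator. -/
def buildFun (hp : p ≠ ∞) (Θ : K × I → I) (hΘ : Function.Injective Θ)
    (A : Lp I p →L[ℝ] Lp I p) (f : Lp I p) : I → ℝ := fun i =>
  haveI := Classical.propDecidable (∃ kj : K × I, Θ kj = i)
  if h : ∃ kj : K × I, Θ kj = i then A (sliceL hp Θ hΘ h.choose.1 f) h.choose.2 else 0

lemma buildFun_apply (hp : p ≠ ∞) (Θ : K × I → I) (hΘ : Function.Injective Θ)
    (A : Lp I p →L[ℝ] Lp I p) (f : Lp I p) (k : K) (j : I) :
    buildFun hp Θ hΘ A f (Θ (k, j)) = A (sliceL hp Θ hΘ k f) j := by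
  have h : ∃ kj : K × I, Θ kj = Θ (k, j) := ⟨(k, j), rfl⟩
  have hc : h.choose = (k, j) := hΘ h.choose_spec
  rw [buildFun, dif_pos h, hc]

lemma buildFun_eq_zero (hp : p ≠ ∞) (Θ : K × I → I) (hΘ : Function.Injective Θ)
    (A : Lp I p →L[ℝ] Lp I p) (f : Lp I p) {i : I} (h : i ∉ Set.range Θ) :
    buildFun hp Θ hΘ A f i = 0 := by
  rw [buildFun, dif_neg]
  rintro ⟨kj, rfl⟩
  exact h ⟨kj, rfl⟩

lemma buildFun_sum_le (hp : p ≠ ∞) (Θ : K × I → I) (hΘ : Function.Injective Θ)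
    (A : Lp I p →L[ℝ] Lp I p) (f : Lp I p) (s : Finset I) :
    ∑ i ∈ s, ‖buildFun hp Θ hΘ A f i‖ ^ p.toReal ≤ (‖A‖ * ‖f‖) ^ p.toReal := by
  classical
  have hq := toRealPos (p := p) hp
  set g : I → ℝ := buildFun hp Θ hΘ A f with hg
  set t : Finset (K × I) := s.preimage Θ hΘ.injOn with ht
  have step1 : ∑ i ∈ s, ‖g i‖ ^ p.toReal = ∑ x ∈ t, ‖g (Θ x)‖ ^ p.toReal := by
    rw [ht, Finset.sum_preimage Θ s hΘ.injOn (fun i => ‖g i‖ ^ p.toReal)]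
    intro i _ hi
    rw [hg, buildFun_eq_zero hp Θ hΘ A f hi, norm_zero, Real.zero_rpow hq.ne']
  rw [step1]
  set Kt := t.image Prod.fst with hKt
  set Jt := t.image Prod.snd with hJt
  have hsub : t ⊆ Kt ×ˢ Jt := by
    intro x hx
    exact Finset.mem_product.2 ⟨Finset.mem_image_of_mem _ hx, Finset.mem_image_of_mem _ hx⟩
  have step2 : ∑ x ∈ t, ‖g (Θ x)‖ ^ p.toReal ≤ ∑ x ∈ Kt ×ˢ Jt, ‖g (Θ x)‖ ^ p.toReal :=
    Finset.sum_le_sum_of_subset_of_nonneg hsub (fun x _ _ => Real.rpow_nonneg (norm_nonneg _) _)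
  have step3 : ∑ x ∈ Kt ×ˢ Jt, ‖g (Θ x)‖ ^ p.toReal
      = ∑ k ∈ Kt, ∑ j ∈ Jt, ‖A (sliceL hp Θ hΘ k f) j‖ ^ p.toReal := by
    rw [Finset.sum_product]
    refine Finset.sum_congr rfl fun k _ => Finset.sum_congr rfl fun j _ => ?_
    rw [hg, buildFun_apply]
  have step4 : ∀ k ∈ Kt, ∑ j ∈ Jt, ‖A (sliceL hp Θ hΘ k f) j‖ ^ p.toReal
      ≤ ‖A‖ ^ p.toReal * ‖sliceL hp Θ hΘ k f‖ ^ p.toReal := by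
    intro k _
    calc ∑ j ∈ Jt, ‖A (sliceL hp Θ hΘ k f) j‖ ^ p.toReal
        ≤ ‖A (sliceL hp Θ hΘ k f)‖ ^ p.toReal := lp.sum_rpow_le_norm_rpow hq _ _
      _ ≤ (‖A‖ * ‖sliceL hp Θ hΘ k f‖) ^ p.toReal :=
          Real.rpow_le_rpow (norm_nonneg _) (A.le_opNorm _) hq.le
      _ = ‖A‖ ^ p.toReal * ‖sliceL hp Θ hΘ k f‖ ^ p.toReal :=
          Real.mul_rpow (norm_nonneg _) (norm_nonneg _)
  calc ∑ x ∈ t, ‖g (Θ x)‖ ^ p.toReal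
      ≤ ∑ k ∈ Kt, ∑ j ∈ Jt, ‖A (sliceL hp Θ hΘ k f) j‖ ^ p.toReal := by
        rw [← step3]; exact step2
    _ ≤ ∑ k ∈ Kt, ‖A‖ ^ p.toReal * ‖sliceL hp Θ hΘ k f‖ ^ p.toReal :=
        Finset.sum_le_sum step4
    _ = ‖A‖ ^ p.toReal * ∑ k ∈ Kt, ‖sliceL hp Θ hΘ k f‖ ^ p.toReal := by
        rw [Finset.mul_sum]
    _ ≤ ‖A‖ ^ p.toReal * ‖f‖ ^ p.toReal :=
        mul_le_mul_of_nonneg_left (slice_sum_le hp Θ hΘ f Kt)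
          (Real.rpow_nonneg (norm_nonneg _) _)
    _ = (‖A‖ * ‖f‖) ^ p.toReal := (Real.mul_rpow (norm_nonneg _) (norm_nonneg _)).symm

lemma buildFun_memℓp (hp : p ≠ ∞) (Θ : K × I → I) (hΘ : Function.Injective Θ)
    (A : Lp I p →L[ℝ] Lp I p) (f : Lp I p) : Memℓp (buildFun hp Θ hΘ A f) p :=
  memℓp_gen' (buildFun_sum_le hp Θ hΘ A f)

/-- The block operator as a linear map. -/
def buildLM (hp : p ≠ ∞) (Θ : K × I → I) (hΘ : Function.Injective Θ)
    (A : Lp I p →L[ℝ] Lp I p) : Lp I p →ₗ[ℝ] Lp I p where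
  toFun f := ⟨buildFun hp Θ hΘ A f, buildFun_memℓp hp Θ hΘ A f⟩
  map_add' f g := by
    apply lp.ext
    funext i
    by_cases h : i ∈ Set.range Θ
    · obtain ⟨⟨k, j⟩, rfl⟩ := h
      show buildFun hp Θ hΘ A (f + g) (Θ (k, j))
        = buildFun hp Θ hΘ A f (Θ (k, j)) + buildFun hp Θ hΘ A g (Θ (k, j))
      rw [buildFun_apply, buildFun_apply, buildFun_apply, map_add, map_add]
      simp
    · show buildFun hp Θ hΘ A (f + g) i = buildFun hp Θ hΘ A f i + buildFun hp Θ hΘ A g i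
      rw [buildFun_eq_zero hp Θ hΘ A _ h, buildFun_eq_zero hp Θ hΘ A _ h,
        buildFun_eq_zero hp Θ hΘ A _ h, add_zero]
  map_smul' c f := by
    apply lp.ext
    funext i
    by_cases h : i ∈ Set.range Θ
    · obtain ⟨⟨k, j⟩, rfl⟩ := h
      show buildFun hp Θ hΘ A (c • f) (Θ (k, j)) = c • buildFun hp Θ hΘ A f (Θ (k, j))
      rw [buildFun_apply, buildFun_apply, map_smul, map_smul]
      simp
    · show buildFun hp Θ hΘ A (c • f) i = c • buildFun hp Θ hΘ A f i
      rw [buildFun_eq_zero hp Θ hΘ A _ h, buildFun_eq_zero hp Θ hΘ A _ h, smul_zero]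

/-- The block operator: acts as `A` inside each block `Θ({k} × I)`, `0` off the range of `Θ`. -/
def buildCLM (hp : p ≠ ∞) (Θ : K × I → I) (hΘ : Function.Injective Θ)
    (A : Lp I p →L[ℝ] Lp I p) : Lp I p →L[ℝ] Lp I p :=
  LinearMap.mkContinuous (buildLM hp Θ hΘ A) ‖A‖ fun f =>
    lp.norm_le_of_forall_sum_le (toRealPos hp) (mul_nonneg (norm_nonneg _) (norm_nonneg _))
      (fun s => buildFun_sum_le hp Θ hΘ A f s)

lemma buildCLM_apply (hp : p ≠ ∞) (Θ : K × I → I) (hΘ : Function.Injective Θ)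
    (A : Lp I p →L[ℝ] Lp I p) (f : Lp I p) (k : K) (j : I) :
    buildCLM hp Θ hΘ A f (Θ (k, j)) = A (sliceL hp Θ hΘ k f) j :=
  buildFun_apply hp Θ hΘ A f k j

lemma buildCLM_eq_zero (hp : p ≠ ∞) (Θ : K × I → I) (hΘ : Function.Injective Θ)
    (A : Lp I p →L[ℝ] Lp I p) (f : Lp I p) {i : I} (h : i ∉ Set.range Θ) :
    buildCLM hp Θ hΘ A f i = 0 :=
  buildFun_eq_zero hp Θ hΘ A f h

/-- Coordinate projection onto the set `U`. -/
def projFun (U : Set I) (f : Lp I p) : I → ℝ := U.indicator f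

lemma projFun_sum_le (hp : p ≠ ∞) (U : Set I) (f : Lp I p) (s : Finset I) :
    ∑ i ∈ s, ‖projFun U f i‖ ^ p.toReal ≤ ((1:ℝ) * ‖f‖) ^ p.toReal := by
  have hq := toRealPos (p := p) hp
  rw [one_mul]
  calc ∑ i ∈ s, ‖projFun U f i‖ ^ p.toReal ≤ ∑ i ∈ s, ‖f i‖ ^ p.toReal := by
        apply Finset.sum_le_sum
        intro i _
        apply Real.rpow_le_rpow (norm_nonneg _) _ hq.le
        rw [projFun]
        by_cases h : i ∈ U
        · rw [Set.indicator_of_mem h]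
        · rw [Set.indicator_of_notMem h, norm_zero]; exact norm_nonneg _
    _ ≤ ‖f‖ ^ p.toReal := lp.sum_rpow_le_norm_rpow hq f s

lemma projFun_memℓp (hp : p ≠ ∞) (U : Set I) (f : Lp I p) : Memℓp (projFun U f) p :=
  memℓp_gen' (projFun_sum_le hp U f)

def projLM (hp : p ≠ ∞) (U : Set I) : Lp I p →ₗ[ℝ] Lp I p where
  toFun f := ⟨projFun U f, projFun_memℓp hp U f⟩
  map_add' f g := by
    apply lp.ext
    funext i
    show U.indicator (⇑(f + g)) i = U.indicator (⇑f) i + U.indicator (⇑g) i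
    by_cases h : i ∈ U
    · rw [Set.indicator_of_mem h, Set.indicator_of_mem h, Set.indicator_of_mem h]; rfl
    · rw [Set.indicator_of_notMem h, Set.indicator_of_notMem h, Set.indicator_of_notMem h, add_zero]
  map_smul' c f := by
    apply lp.ext
    funext i
    show U.indicator (⇑(c • f)) i = c • U.indicator (⇑f) i
    by_cases h : i ∈ U
    · simp [Set.indicator_of_mem h]
    · rw [Set.indicator_of_notMem h, Set.indicator_of_notMem h, smul_zero]

def projCLM (hp : p ≠ ∞) (U : Set I) : Lp I p →L[ℝ] Lp I p :=
  LinearMap.mkContinuous (projLM hp U) 1 fun f =>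
    lp.norm_le_of_forall_sum_le (toRealPos hp) (mul_nonneg zero_le_one (norm_nonneg _))
      (fun s => projFun_sum_le hp U f s)

lemma projCLM_of_mem (hp : p ≠ ∞) (U : Set I) (f : Lp I p) {i : I} (h : i ∈ U) :
    projCLM hp U f i = f i := by
  show U.indicator (⇑f) i = f i
  rw [Set.indicator_of_mem h]

lemma projCLM_of_not_mem (hp : p ≠ ∞) (U : Set I) (f : Lp I p) {i : I} (h : i ∉ U) :
    projCLM hp U f i = 0 := by
  show U.indicator (⇑f) i = 0
  rw [Set.indicator_of_notMem h]

end StmtAux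

end

theorem stmt_10 {I : Type*} [Nonempty I] (p : ℝ≥0∞) [Fact (1 ≤ p)] (hp : p ≠ ∞)
    (D : Lp I p →L[ℝ] Lp I p) (hD : IncreasableDsS D)
    (I₀ : Set I) (hI₀ : I₀.Countable)
    (θ : I₀ → I → I) (hinj : ∀ k, Function.Injective (θ k))
    (hdisj : ∀ k l : I₀, k ≠ l → Set.range (θ k) ∩ Set.range (θ l) = ∅)
    (P : I₀ → (Lp I p →L[ℝ] Lp I p)) (hP : ∀ k, IsPTheta (θ k) (P k)) :
    ∃ S : Lp I p →L[ℝ] Lp I p, IncreasableDsS S ∧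
      ∀ k : I₀, (P k).comp D = S.comp (P k) := by
  classical
  open StmtAux in
  obtain ⟨hDpos, A₁, ⟨hA₁pos, hrow, hcol⟩, hle⟩ := hD
  set Θ : I₀ × I → I := fun kj => θ kj.1 kj.2 with hΘdef
  have hnotmem : ∀ (k l : I₀), k ≠ l → ∀ m : I, θ l m ∉ Set.range (θ k) := by
    intro k l hkl m hmem
    have hm : θ l m ∈ Set.range (θ k) ∩ Set.range (θ l) := ⟨hmem, ⟨m, rfl⟩⟩
    rw [hdisj k l hkl] at hm
    exact hm
  have hΘ : Function.Injective Θ := by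
    rintro ⟨k, a⟩ ⟨l, b⟩ h
    simp only [hΘdef] at h
    rcases eq_or_ne k l with rfl | hkl
    · rw [hinj k h]
    · exact absurd ⟨a, h⟩ (hnotmem k l hkl b)
  -- slices of `P k f`
  have hslicePk : ∀ (k : I₀) (f : Lp I p), sliceL hp Θ hΘ k (P k f) = f := by
    intro k f
    apply lp.ext
    funext m
    rw [sliceL_apply]
    exact (hP k).1 f m
  have hslicePk' : ∀ (k l : I₀) (f : Lp I p), k ≠ l → sliceL hp Θ hΘ l (P k f) = 0 := by
    intro k l f hkl
    apply lp.ext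
    funext m
    rw [sliceL_apply]
    show (P k f) (θ l m) = (0 : ∀ _ : I, ℝ) m
    rw [(hP k).2 f (θ l m) (hnotmem k l hkl m)]
    rfl
  -- slices of standard basis vectors
  have hsliceStd : ∀ (k : I₀) (j' : I),
      sliceL hp Θ hΘ k (stdVec p (Θ (k, j'))) = stdVec p j' := by
    intro k j'
    apply lp.ext
    funext m
    rw [sliceL_apply]
    rcases eq_or_ne m j' with rfl | hm
    · rw [stdVec_self, stdVec_self]
    · rw [stdVec_ne (fun hc => hm (by simpa using hΘ hc)), stdVec_ne hm]
  have hsliceStd0 : ∀ (k : I₀) (j : I), (¬ ∃ j', Θ (k, j') = j) →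
      sliceL hp Θ hΘ k (stdVec p j) = 0 := by
    intro k j hj
    apply lp.ext
    funext m
    rw [sliceL_apply]
    show stdVec p j (Θ (k, m)) = (0 : ∀ _ : I, ℝ) m
    rw [stdVec_ne (fun hc => hj ⟨m, hc⟩)]
    rfl
  set S : Lp I p →L[ℝ] Lp I p := buildCLM hp Θ hΘ D with hSdef
  set Sb : Lp I p →L[ℝ] Lp I p := buildCLM hp Θ hΘ A₁ with hSbdef
  set Q : Lp I p →L[ℝ] Lp I p := projCLM hp (Set.range Θ)ᶜ with hQdef
  have hS1apply : ∀ (f : Lp I p) (i : I), (Sb + Q) f i = Sb f i + Q f i := fun f i => rfl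
  have hQmem : ∀ (f : Lp I p) (i : I), i ∉ Set.range Θ → Q f i = f i := by
    intro f i hi
    exact projCLM_of_mem hp _ f hi
  have hQmem' : ∀ (f : Lp I p) (i : I), i ∈ Set.range Θ → Q f i = 0 := by
    intro f i hi
    exact projCLM_of_not_mem hp _ f (fun hc => hc hi)
  refine ⟨S, ⟨?_, Sb + Q, ⟨?_, ?_, ?_⟩, ?_⟩, ?_⟩
  · -- IsPos S
    intro f hf i
    by_cases hi : i ∈ Set.range Θ
    · obtain ⟨⟨k, i'⟩, rfl⟩ := hi
      rw [hSdef, buildCLM_apply]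
      apply hDpos
      intro m
      rw [sliceL_apply]
      exact hf _
    · rw [hSdef, buildCLM_eq_zero hp Θ hΘ D f hi]
  · -- IsPos (Sb + Q)
    intro f hf i
    rw [hS1apply]
    have h1 : 0 ≤ Sb f i := by
      by_cases hi : i ∈ Set.range Θ
      · obtain ⟨⟨k, i'⟩, rfl⟩ := hi
        rw [hSbdef, buildCLM_apply]
        apply hA₁pos
        intro m
        rw [sliceL_apply]
        exact hf _
      · rw [hSbdef, buildCLM_eq_zero hp Θ hΘ A₁ f hi]
    have h2 : 0 ≤ Q f i := by
      by_cases hi : i ∈ Set.range Θ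
      · rw [hQmem' f i hi]
      · rw [hQmem f i hi]; exact hf i
    linarith
  · -- rows
    intro i
    by_cases hi : i ∈ Set.range Θ
    · obtain ⟨⟨k, i'⟩, rfl⟩ := hi
      have hvan : ∀ j, j ∉ Set.range (fun m => Θ (k, m)) →
          (Sb + Q) (stdVec p j) (Θ (k, i')) = 0 := by
        intro j hj
        rw [hS1apply, hQmem' _ _ ⟨(k, i'), rfl⟩, add_zero, hSbdef, buildCLM_apply,
          hsliceStd0 k j (fun ⟨j', hj'⟩ => hj ⟨j', hj'⟩), map_zero]
        rfl
      rw [← Function.Injective.hasSum_iff (theta_slice_inj Θ hΘ k) hvan]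
      have hcomp : ((fun j => (Sb + Q) (stdVec p j) (Θ (k, i'))) ∘ (fun m => Θ (k, m)))
          = fun j' => A₁ (stdVec p j') i' := by
        funext j'
        show (Sb + Q) (stdVec p (Θ (k, j'))) (Θ (k, i')) = A₁ (stdVec p j') i'
        rw [hS1apply, hQmem' _ _ ⟨(k, i'), rfl⟩, add_zero, hSbdef, buildCLM_apply,
          hsliceStd]
      rw [hcomp]
      exact hrow i'
    · have hone : (Sb + Q) (stdVec p i) i = 1 := by
        rw [hS1apply, hSbdef, buildCLM_eq_zero hp Θ hΘ A₁ _ hi, hQmem _ _ hi, stdVec_self,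
          zero_add]
      have := hasSum_single (f := fun j => (Sb + Q) (stdVec p j) i) i ?_
      · rwa [hone] at this
      · intro j hj
        show ((Sb + Q) (stdVec p j) : ∀ _ : I, ℝ) i = 0
        rw [hS1apply, hSbdef, buildCLM_eq_zero hp Θ hΘ A₁ _ hi, hQmem _ _ hi,
          stdVec_ne (Ne.symm hj), zero_add]
  · -- columns
    intro j
    by_cases hj : j ∈ Set.range Θ
    · obtain ⟨⟨k, j'⟩, rfl⟩ := hj
      have hvan : ∀ i, i ∉ Set.range (fun m => Θ (k, m)) →
          (Sb + Q) (stdVec p (Θ (k, j'))) i = 0 := by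
        intro i hi
        by_cases hiΘ : i ∈ Set.range Θ
        · obtain ⟨⟨l, i'⟩, rfl⟩ := hiΘ
          have hlk : l ≠ k := by
            rintro rfl
            exact hi ⟨i', rfl⟩
          have hsl : ¬ ∃ m, Θ (l, m) = Θ (k, j') := by
            rintro ⟨m, hm⟩
            exact hlk (congrArg Prod.fst (hΘ hm))
          rw [hS1apply, hQmem' _ _ ⟨(l, i'), rfl⟩, add_zero, hSbdef, buildCLM_apply,
            hsliceStd0 l _ hsl, map_zero]
          rfl
        · rw [hS1apply, hSbdef, buildCLM_eq_zero hp Θ hΘ A₁ _ hiΘ, hQmem _ _ hiΘ, zero_add]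
          exact stdVec_ne (fun hc => hiΘ (hc ▸ ⟨(k, j'), rfl⟩))
      rw [← Function.Injective.hasSum_iff (theta_slice_inj Θ hΘ k) hvan]
      have hcomp : ((fun i => (Sb + Q) (stdVec p (Θ (k, j'))) i) ∘ (fun m => Θ (k, m)))
          = fun i' => A₁ (stdVec p j') i' := by
        funext i'
        show (Sb + Q) (stdVec p (Θ (k, j'))) (Θ (k, i')) = A₁ (stdVec p j') i'
        rw [hS1apply, hQmem' _ _ ⟨(k, i'), rfl⟩, add_zero, hSbdef, buildCLM_apply, hsliceStd]
      rw [hcomp]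
      exact hcol j'
    · have hzero : ∀ i, i ≠ j → (Sb + Q) (stdVec p j) i = 0 := by
        intro i hij
        by_cases hiΘ : i ∈ Set.range Θ
        · obtain ⟨⟨l, i'⟩, rfl⟩ := hiΘ
          rw [hS1apply, hQmem' _ _ ⟨(l, i'), rfl⟩, add_zero, hSbdef, buildCLM_apply,
            hsliceStd0 l j (fun ⟨m, hm⟩ => hj ⟨(l, m), hm⟩), map_zero]
          rfl
        · rw [hS1apply, hSbdef, buildCLM_eq_zero hp Θ hΘ A₁ _ hiΘ, hQmem _ _ hiΘ, zero_add]
          exact stdVec_ne hij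
      have hone : (Sb + Q) (stdVec p j) j = 1 := by
        rw [hS1apply, hSbdef, buildCLM_eq_zero hp Θ hΘ A₁ _ hj, hQmem _ _ hj, stdVec_self,
          zero_add]
      have := hasSum_single (f := fun i => (Sb + Q) (stdVec p j) i) j hzero
      simpa only [hone] using this
  · -- domination
    intro i j
    by_cases hi : i ∈ Set.range Θ
    · obtain ⟨⟨k, i'⟩, rfl⟩ := hi
      rw [hS1apply, hQmem' _ _ ⟨(k, i'), rfl⟩, add_zero, hSdef, hSbdef,
        buildCLM_apply, buildCLM_apply]
      by_cases hjk : ∃ j', Θ (k, j') = j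
      · obtain ⟨j', rfl⟩ := hjk
        rw [hsliceStd]
        exact hle i' j'
      · rw [hsliceStd0 k j hjk, map_zero, map_zero]
    · rw [hS1apply, hSdef, hSbdef, buildCLM_eq_zero hp Θ hΘ D _ hi,
        buildCLM_eq_zero hp Θ hΘ A₁ _ hi, hQmem _ _ hi, zero_add]
      exact stdVec_nonneg j i
  · -- intertwining
    intro k
    refine ContinuousLinearMap.ext fun f => ?_
    apply lp.ext
    funext i
    show (P k) (D f) i = S ((P k) f) i
    by_cases hi : i ∈ Set.range Θ
    · obtain ⟨⟨l, i'⟩, rfl⟩ := hi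
      rw [hSdef, buildCLM_apply]
      rcases eq_or_ne l k with rfl | hlk
      · rw [hslicePk]
        exact (hP l).1 (D f) i'
      · rw [hslicePk' k l f hlk.symm, map_zero]
        show (P k) (D f) (θ l i') = (0 : Lp I p) i'
        rw [(hP k).2 (D f) (θ l i') (hnotmem k l hlk.symm i')]
        rfl
    · rw [hSdef, buildCLM_eq_zero hp Θ hΘ D _ hi]
      exact (hP k).2 (D f) i (fun ⟨m, hm⟩ => hi ⟨(k, m), hm⟩)
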